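/- Assume ν̄ᵢ > 0 for all i, U positive definite and W positive semidefinite. Let S̄ be a positive semidefinite n×n matrix with S̄ = Π_c(S̄), and set K̄ = −Aᵀ S̄ B N̄ M(S̄)⁻¹. Then for every n×n matrix R with R ⪰ S̄ one has 0 ⪯ Π_c(R) − S̄ ⪯ Σ_{I⊆{1,…,m}} η_I² F_I(K̄) (R − S̄) F_I(K̄)ᵀ, where F_I(K̄) = Aᵀ + K̄ N_I Bᵀ. -/

import Mathlib

open Matrix

/-- The scalar η_I = √(∏_{i∈I} ν̄ᵢ · ∏_{i∉I}(1−ν̄ᵢ)). -/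
noncomputable def eta {m : ℕ} (ν : Fin m → ℝ) (I : Finset (Fin m)) : ℝ :=
  Real.sqrt ((∏ i ∈ I, ν i) * (∏ i ∈ Iᶜ, (1 - ν i)))

/-- The m×m diagonal 0/1 matrix N_I whose i-th diagonal entry is 1 exactly when i ∈ I. -/
def NI {m : ℕ} (I : Finset (Fin m)) : Matrix (Fin m) (Fin m) ℝ :=
  Matrix.diagonal fun i => if i ∈ I then 1 else 0

/-- φ(K,X) = Σ_{I⊆{1,…,m}} η_I² (F_I(K) X F_I(K)ᵀ + V_I(K)), where
F_I(K) = Aᵀ + K N_I Bᵀ and V_I(K) = W + K N_I U N_I Kᵀ. -/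
noncomputable def phi {m n : ℕ} (ν : Fin m → ℝ) (A W : Matrix (Fin n) (Fin n) ℝ)
    (B : Matrix (Fin n) (Fin m) ℝ) (U : Matrix (Fin m) (Fin m) ℝ)
    (K : Matrix (Fin n) (Fin m) ℝ) (X : Matrix (Fin n) (Fin n) ℝ) :
    Matrix (Fin n) (Fin n) ℝ :=
  ∑ I : Finset (Fin m), (eta ν I) ^ 2 •
    ((Aᵀ + K * NI I * Bᵀ) * X * (Aᵀ + K * NI I * Bᵀ)ᵀ + (W + K * NI I * U * NI I * Kᵀ))

/-- M(X) = Σ_{I⊆{1,…,m}} η_I² N_I (U + Bᵀ X B) N_I. -/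
noncomputable def Mop {m n : ℕ} (ν : Fin m → ℝ) (B : Matrix (Fin n) (Fin m) ℝ)
    (U : Matrix (Fin m) (Fin m) ℝ) (X : Matrix (Fin n) (Fin n) ℝ) :
    Matrix (Fin m) (Fin m) ℝ :=
  ∑ I : Finset (Fin m), (eta ν I) ^ 2 • (NI I * (U + Bᵀ * X * B) * NI I)

/-- The modified algebraic Riccati operator
Π_c(X) = Aᵀ X A + W − Aᵀ X B N̄ M(X)⁻¹ N̄ Bᵀ X A, where N̄ = diag(ν̄₁,…,ν̄ₘ). -/
noncomputable def Pic {m n : ℕ} (ν : Fin m → ℝ) (A W : Matrix (Fin n) (Fin n) ℝ)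
    (B : Matrix (Fin n) (Fin m) ℝ) (U : Matrix (Fin m) (Fin m) ℝ)
    (X : Matrix (Fin n) (Fin n) ℝ) : Matrix (Fin n) (Fin n) ℝ :=
  Aᵀ * X * A + W -
    Aᵀ * X * B * Matrix.diagonal ν * (Mop ν B U X)⁻¹ * Matrix.diagonal ν * Bᵀ * X * A

section Helpers

variable {m n : ℕ}

lemma NI_transpose (I : Finset (Fin m)) : (NI I)ᵀ = NI I := Matrix.diagonal_transpose _

lemma eta_sq (ν : Fin m → ℝ) (hν : ∀ i, ν i ∈ Set.Ioc (0:ℝ) 1) (I : Finset (Fin m)) :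
    eta ν I ^ 2 = (∏ i ∈ I, ν i) * ∏ i ∈ Iᶜ, (1 - ν i) := by
  apply Real.sq_sqrt
  exact mul_nonneg (Finset.prod_nonneg fun i _ => (hν i).1.le)
    (Finset.prod_nonneg fun i _ => by linarith [(hν i).2])

lemma sum_eta_sq (ν : Fin m → ℝ) (hν : ∀ i, ν i ∈ Set.Ioc (0:ℝ) 1) :
    ∑ I : Finset (Fin m), eta ν I ^ 2 = 1 := by
  calc ∑ I : Finset (Fin m), eta ν I ^ 2
      = ∑ I : Finset (Fin m), (∏ i ∈ I, ν i) * ∏ i ∈ Iᶜ, (1 - ν i) :=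
        Finset.sum_congr rfl fun I _ => eta_sq ν hν I
    _ = ∏ i, (ν i + (1 - ν i)) := (Fintype.prod_add _ _).symm
    _ = 1 := by simp

lemma sum_eta_sq_indicator (ν : Fin m → ℝ) (hν : ∀ i, ν i ∈ Set.Ioc (0:ℝ) 1) (i : Fin m) :
    ∑ I : Finset (Fin m), (if i ∈ I then eta ν I ^ 2 else 0) = ν i := by
  have hsplit : ∑ I : Finset (Fin m), (if i ∈ I then eta ν I ^ 2 else 0)
      = (∑ I : Finset (Fin m), eta ν I ^ 2)
        - ∑ I : Finset (Fin m), (if i ∈ I then 0 else eta ν I ^ 2) := by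
    rw [← Finset.sum_sub_distrib]
    refine Finset.sum_congr rfl fun I _ => ?_
    split <;> ring
  have hcompl : ∑ I : Finset (Fin m), (if i ∈ I then 0 else eta ν I ^ 2) = 1 - ν i := by
    have key : ∀ I : Finset (Fin m),
        (if i ∈ I then (0:ℝ) else eta ν I ^ 2)
        = (∏ j ∈ I, (if j = i then 0 else ν j)) * ∏ j ∈ Iᶜ, (1 - ν j) := by
      intro I
      by_cases h : i ∈ I
      · rw [if_pos h, Finset.prod_eq_zero h (by simp), zero_mul]
      · rw [if_neg h, eta_sq ν hν]
        congr 1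
        exact (Finset.prod_congr rfl fun j hj => if_neg (fun e : j = i => h (e ▸ hj))).symm
    calc ∑ I : Finset (Fin m), (if i ∈ I then (0:ℝ) else eta ν I ^ 2)
        = ∑ I : Finset (Fin m), (∏ j ∈ I, (if j = i then 0 else ν j)) * ∏ j ∈ Iᶜ, (1 - ν j) :=
          Finset.sum_congr rfl fun I _ => key I
      _ = ∏ j, ((if j = i then 0 else ν j) + (1 - ν j)) := (Fintype.prod_add _ _).symm
      _ = ∏ j, (if j = i then 1 - ν j else 1) := by
          refine Finset.prod_congr rfl fun j _ => ?_
          split <;> ring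
      _ = 1 - ν i := by rw [Finset.prod_ite_eq' Finset.univ i (fun j => 1 - ν j),
            if_pos (Finset.mem_univ i)]
  rw [hsplit, sum_eta_sq ν hν, hcompl]; ring

lemma sum_eta_sq_NI (ν : Fin m → ℝ) (hν : ∀ i, ν i ∈ Set.Ioc (0:ℝ) 1) :
    ∑ I : Finset (Fin m), eta ν I ^ 2 • NI I
      = (Matrix.diagonal ν : Matrix (Fin m) (Fin m) ℝ) := by
  ext i j
  simp only [Matrix.sum_apply, Matrix.smul_apply, NI, Matrix.diagonal_apply, smul_eq_mul]
  by_cases h : i = j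
  · subst h
    rw [if_pos rfl, ← sum_eta_sq_indicator ν hν i]
    refine Finset.sum_congr rfl fun I _ => ?_
    by_cases hi : i ∈ I <;> simp [hi]
  · simp [h]

lemma posSemidef_smul {c : ℝ} (hc : 0 ≤ c) {P : Matrix (Fin m) (Fin m) ℝ}
    (h : P.PosSemidef) : (c • P).PosSemidef := by
  constructor
  · show (c • P)ᴴ = c • P
    have hP : Pᵀ = P := by
      rw [← Matrix.conjTranspose_eq_transpose_of_trivial]; exact h.1
    simp [Matrix.conjTranspose_smul, hP]
  · exact (h.smul hc).2

lemma posDef_smul {c : ℝ} (hc : 0 < c) {P : Matrix (Fin m) (Fin m) ℝ}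
    (h : P.PosDef) : (c • P).PosDef := by
  constructor
  · show (c • P)ᴴ = c • P
    have hP : Pᵀ = P := by
      rw [← Matrix.conjTranspose_eq_transpose_of_trivial]; exact h.1
    simp [Matrix.conjTranspose_smul, hP]
  · exact (h.smul hc).2

lemma posSemidef_mul_mul_transpose {k : ℕ} {P : Matrix (Fin k) (Fin k) ℝ}
    (h : P.PosSemidef) (C : Matrix (Fin n) (Fin k) ℝ) : (C * P * Cᵀ).PosSemidef := by
  simpa [Matrix.conjTranspose_eq_transpose_of_trivial] using h.mul_mul_conjTranspose_same C

lemma posSemidef_sum {ι : Type*} (s : Finset ι) (f : ι → Matrix (Fin n) (Fin n) ℝ)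
    (h : ∀ i ∈ s, (f i).PosSemidef) : (∑ i ∈ s, f i).PosSemidef :=
  Finset.sum_induction f _ (fun a b ha hb => ha.add hb) Matrix.PosSemidef.zero h

lemma NI_univ : NI (Finset.univ : Finset (Fin m)) = 1 := by
  ext i j; simp [NI, Matrix.diagonal_apply, Matrix.one_apply]

lemma Mop_posDef (ν : Fin m → ℝ) (hν : ∀ i, ν i ∈ Set.Ioc (0:ℝ) 1)
    (B : Matrix (Fin n) (Fin m) ℝ) {U : Matrix (Fin m) (Fin m) ℝ} (hU : U.PosDef)
    {X : Matrix (Fin n) (Fin n) ℝ} (hX : X.PosSemidef) : (Mop ν B U X).PosDef := by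
  have hBXB : (Bᵀ * X * B).PosSemidef := by
    simpa [Matrix.conjTranspose_eq_transpose_of_trivial] using hX.conjTranspose_mul_mul_same B
  have hUB : (U + Bᵀ * X * B).PosDef := hU.add_posSemidef hBXB
  have hterm : ∀ I : Finset (Fin m), (NI I * (U + Bᵀ * X * B) * NI I).PosSemidef := fun I => by
    have := posSemidef_mul_mul_transpose hUB.posSemidef (NI I)
    rwa [NI_transpose] at this
  rw [Mop, ← Finset.add_sum_erase _ _ (Finset.mem_univ (Finset.univ : Finset (Fin m)))]
  apply Matrix.PosDef.add_posSemidef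
  · rw [NI_univ, Matrix.one_mul, Matrix.mul_one]
    refine posDef_smul ?_ hUB
    rw [eta_sq ν hν]
    simp only [Finset.compl_univ, Finset.prod_empty, mul_one]
    exact Finset.prod_pos fun i _ => (hν i).1
  · exact posSemidef_sum _ _ fun I _ => posSemidef_smul (sq_nonneg _) (hterm I)

lemma phi_eq (ν : Fin m → ℝ) (hν : ∀ i, ν i ∈ Set.Ioc (0:ℝ) 1)
    (A W : Matrix (Fin n) (Fin n) ℝ) (B : Matrix (Fin n) (Fin m) ℝ)
    (U : Matrix (Fin m) (Fin m) ℝ) (K : Matrix (Fin n) (Fin m) ℝ)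
    (X : Matrix (Fin n) (Fin n) ℝ) :
    phi ν A W B U K X =
      (Aᵀ * X * A + W) + Aᵀ * X * B * (Matrix.diagonal ν) * Kᵀ
        + K * (Matrix.diagonal ν) * (Bᵀ * X * A) + K * Mop ν B U X * Kᵀ := by
  have h1 : ∀ I : Finset (Fin m),
      (eta ν I) ^ 2 • ((Aᵀ + K * NI I * Bᵀ) * X * (Aᵀ + K * NI I * Bᵀ)ᵀ
          + (W + K * NI I * U * NI I * Kᵀ))
      = (eta ν I) ^ 2 • (Aᵀ * X * A + W)
        + Aᵀ * X * B * ((eta ν I) ^ 2 • NI I) * Kᵀ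
        + K * ((eta ν I) ^ 2 • NI I) * (Bᵀ * X * A)
        + K * ((eta ν I) ^ 2 • (NI I * (U + Bᵀ * X * B) * NI I)) * Kᵀ := by
    intro I
    simp only [Matrix.transpose_add, Matrix.transpose_mul, Matrix.transpose_transpose,
      NI_transpose, Matrix.smul_mul, Matrix.mul_smul, ← smul_add]
    congr 1
    simp only [Matrix.mul_add, Matrix.add_mul, Matrix.mul_assoc]
    abel
  rw [phi, Finset.sum_congr rfl fun I _ => h1 I]
  simp only [Finset.sum_add_distrib]
  rw [← Finset.sum_smul, sum_eta_sq ν hν, one_smul,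
    ← Matrix.sum_mul, ← Matrix.mul_sum, sum_eta_sq_NI ν hν,
    ← Matrix.sum_mul, ← Matrix.mul_sum, sum_eta_sq_NI ν hν,
    ← Matrix.sum_mul, ← Matrix.mul_sum, ← Mop]

lemma phi_sub (ν : Fin m → ℝ) (A W : Matrix (Fin n) (Fin n) ℝ)
    (B : Matrix (Fin n) (Fin m) ℝ) (U : Matrix (Fin m) (Fin m) ℝ)
    (K : Matrix (Fin n) (Fin m) ℝ) (X Y : Matrix (Fin n) (Fin n) ℝ) :
    phi ν A W B U K X - phi ν A W B U K Y =
      ∑ I : Finset (Fin m), eta ν I ^ 2 •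
        ((Aᵀ + K * NI I * Bᵀ) * (X - Y) * (Aᵀ + K * NI I * Bᵀ)ᵀ) := by
  rw [phi, phi, ← Finset.sum_sub_distrib]
  refine Finset.sum_congr rfl fun I _ => ?_
  rw [← smul_sub]
  congr 1
  rw [Matrix.mul_sub, Matrix.sub_mul]
  abel

lemma key (ν : Fin m → ℝ) (hν : ∀ i, ν i ∈ Set.Ioc (0:ℝ) 1)
    (A W : Matrix (Fin n) (Fin n) ℝ) (B : Matrix (Fin n) (Fin m) ℝ)
    {U : Matrix (Fin m) (Fin m) ℝ} (hU : U.PosDef)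
    {X : Matrix (Fin n) (Fin n) ℝ} (hX : X.PosSemidef)
    (K : Matrix (Fin n) (Fin m) ℝ) :
    phi ν A W B U K X = Pic ν A W B U X +
      (K + Aᵀ * X * B * Matrix.diagonal ν * (Mop ν B U X)⁻¹) * Mop ν B U X *
      (K + Aᵀ * X * B * Matrix.diagonal ν * (Mop ν B U X)⁻¹)ᵀ := by
  have hMpd : (Mop ν B U X).PosDef := Mop_posDef ν hν B hU hX
  have hdet : IsUnit (Mop ν B U X).det := isUnit_iff_ne_zero.mpr hMpd.det_pos.ne'
  have hMT : (Mop ν B U X)ᵀ = Mop ν B U X := by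
    rw [← Matrix.conjTranspose_eq_transpose_of_trivial]; exact hMpd.isHermitian
  have hiT : ((Mop ν B U X)⁻¹)ᵀ = (Mop ν B U X)⁻¹ := by
    rw [Matrix.transpose_nonsing_inv, hMT]
  have hXT : Xᵀ = X := by
    rw [← Matrix.conjTranspose_eq_transpose_of_trivial]; exact hX.isHermitian
  have e1 : ∀ Z : Matrix (Fin m) (Fin n) ℝ, Mop ν B U X * ((Mop ν B U X)⁻¹ * Z) = Z := by
    intro Z; rw [← Matrix.mul_assoc, Matrix.mul_nonsing_inv _ hdet, Matrix.one_mul]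
  have e2 : ∀ Z : Matrix (Fin m) (Fin n) ℝ, (Mop ν B U X)⁻¹ * (Mop ν B U X * Z) = Z := by
    intro Z; rw [← Matrix.mul_assoc, Matrix.nonsing_inv_mul _ hdet, Matrix.one_mul]
  rw [phi_eq ν hν, Pic]
  simp only [Matrix.transpose_add, Matrix.transpose_mul, Matrix.transpose_transpose,
    Matrix.diagonal_transpose, hXT, hiT, Matrix.add_mul, Matrix.mul_add, sub_eq_add_neg,
    Matrix.mul_assoc, e1, e2]
  abel

end Helpers

/-- let S̄ ⪰ 0 be a fixed point of Π_c and K̄ = −Aᵀ S̄ B N̄ M(S̄)⁻¹.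
Then for every R ⪰ S̄:
0 ⪯ Π_c(R) − S̄ ⪯ Σ_{I⊆{1,…,m}} η_I² F_I(K̄) (R − S̄) F_I(K̄)ᵀ,
where F_I(K̄) = Aᵀ + K̄ N_I Bᵀ. -/
theorem Pic_fixed_point_contraction (m n : ℕ) (hm : 0 < m) (hn : 0 < n)
    (ν : Fin m → ℝ) (hν : ∀ i, ν i ∈ Set.Ioc (0 : ℝ) 1)
    (A W : Matrix (Fin n) (Fin n) ℝ) (B : Matrix (Fin n) (Fin m) ℝ)
    (U : Matrix (Fin m) (Fin m) ℝ) (hW : W.PosSemidef) (hU : U.PosDef)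
    (Sbar : Matrix (Fin n) (Fin n) ℝ) (hSbar : Sbar.PosSemidef)
    (hfix : Pic ν A W B U Sbar = Sbar)
    (R : Matrix (Fin n) (Fin n) ℝ) (hR : (R - Sbar).PosSemidef) :
    (Pic ν A W B U R - Sbar).PosSemidef ∧
    ((∑ I : Finset (Fin m), (eta ν I) ^ 2 •
        ((Aᵀ + (-(Aᵀ * Sbar * B * Matrix.diagonal ν * (Mop ν B U Sbar)⁻¹)) * NI I * Bᵀ) *
          (R - Sbar) *
          (Aᵀ + (-(Aᵀ * Sbar * B * Matrix.diagonal ν * (Mop ν B U Sbar)⁻¹)) * NI I * Bᵀ)ᵀ)) -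
      (Pic ν A W B U R - Sbar)).PosSemidef := by
  have hRpsd : R.PosSemidef := by
    have := hSbar.add hR
    simpa using this
  have hMS : (Mop ν B U Sbar).PosDef := Mop_posDef ν hν B hU hSbar
  have hMR : (Mop ν B U R).PosDef := Mop_posDef ν hν B hU hRpsd
  set Kb : Matrix (Fin n) (Fin m) ℝ :=
    -(Aᵀ * Sbar * B * Matrix.diagonal ν * (Mop ν B U Sbar)⁻¹) with hKbdef
  set KR : Matrix (Fin n) (Fin m) ℝ :=
    -(Aᵀ * R * B * Matrix.diagonal ν * (Mop ν B U R)⁻¹) with hKRdef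
  have hKR : phi ν A W B U KR R = Pic ν A W B U R := by
    rw [key ν hν A W B hU hRpsd KR, hKRdef]
    simp
  have hKb : phi ν A W B U Kb Sbar = Sbar := by
    rw [key ν hν A W B hU hSbar Kb, hKbdef, hfix]
    simp
  have hQpsd : ∀ K : Matrix (Fin n) (Fin m) ℝ,
      (phi ν A W B U K Sbar - Sbar).PosSemidef := by
    intro K
    rw [key ν hν A W B hU hSbar K, hfix, add_sub_cancel_left]
    exact posSemidef_mul_mul_transpose hMS.posSemidef _
  have hsumpsd : ∀ K : Matrix (Fin n) (Fin m) ℝ,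
      (∑ I : Finset (Fin m), eta ν I ^ 2 •
        ((Aᵀ + K * NI I * Bᵀ) * (R - Sbar) * (Aᵀ + K * NI I * Bᵀ)ᵀ)).PosSemidef := by
    intro K
    exact posSemidef_sum _ _ fun I _ =>
      posSemidef_smul (sq_nonneg _) (posSemidef_mul_mul_transpose hR _)
  constructor
  · have e : Pic ν A W B U R - Sbar
        = (phi ν A W B U KR Sbar - Sbar)
          + (phi ν A W B U KR R - phi ν A W B U KR Sbar) := by
      rw [hKR]; abel
    rw [e, phi_sub]
    exact (hQpsd KR).add (hsumpsd KR)
  · have e2 : phi ν A W B U Kb R = Sbar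
        + ∑ I : Finset (Fin m), eta ν I ^ 2 •
          ((Aᵀ + Kb * NI I * Bᵀ) * (R - Sbar) * (Aᵀ + Kb * NI I * Bᵀ)ᵀ) := by
      rw [← phi_sub ν A W B U Kb R Sbar, hKb]
      abel
    have e3 : (∑ I : Finset (Fin m), eta ν I ^ 2 •
          ((Aᵀ + Kb * NI I * Bᵀ) * (R - Sbar) * (Aᵀ + Kb * NI I * Bᵀ)ᵀ))
        - (Pic ν A W B U R - Sbar)
        = phi ν A W B U Kb R - Pic ν A W B U R := by
      rw [e2]; abel
    rw [e3, key ν hν A W B hU hRpsd Kb, add_sub_cancel_left]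
    exact posSemidef_mul_mul_transpose hMR.posSemidef _
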